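/- Let R be a ring such that every direct sum of injective left R-modules is injective. Then R is left noetherian. -/

import Mathlib

universe u v

/-- A submodule `A ≤ M` is pure if every finite system of `R`-linear equations with
parameters in `A` that is solvable in `M` is solvable in `A`. -/
def IsPureSubmodule (R : Type u) [Ring R] {M : Type v} [AddCommGroup M] [Module R M]
    (A : Submodule R M) : Prop :=
  ∀ (k n : ℕ) (c : Fin k → Fin n → R) (a : Fin k → M),
    (∀ i, a i ∈ A) →
    (∃ x : Fin n → M, ∀ i, (∑ j, c i j • x j) = a i) →
    ∃ x : Fin n → M, (∀ j, x j ∈ A) ∧ ∀ i, (∑ j, c i j • x j) = a i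

/-- A linear map is a pure embedding if it is injective and its range is a pure submodule. -/
def IsPureEmbedding (R : Type u) [Ring R] {M N : Type v} [AddCommGroup M] [Module R M]
    [AddCommGroup N] [Module R N] (f : M →ₗ[R] N) : Prop :=
  Function.Injective f ∧ IsPureSubmodule R (LinearMap.range f)

/-- A module is pure-injective if it is a direct summand of every module containing it
as a pure submodule, i.e. every pure embedding out of it admits a retraction. -/
def IsPureInjective (R : Type u) [Ring R] (M : Type v) [AddCommGroup M] [Module R M] : Prop :=
  ∀ (N : Type v) [AddCommGroup N] [Module R N] (f : M →ₗ[R] N),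
    IsPureEmbedding R f → ∃ g : N →ₗ[R] M, g ∘ₗ f = LinearMap.id

/-- A module is absolutely pure if it is pure in every module containing it. -/
def IsAbsolutelyPure (R : Type u) [Ring R] (M : Type v) [AddCommGroup M] [Module R M] : Prop :=
  ∀ (N : Type v) [AddCommGroup N] [Module R N] (f : M →ₗ[R] N),
    Function.Injective f → IsPureSubmodule R (LinearMap.range f)

/-- if every direct sum of injective left R-modules is injective,
then R is left noetherian. -/
theorem stmt9 (R : Type u) [Ring R]
    (H : ∀ (ι : Type u) (M : ι → Type u) [∀ i, AddCommGroup (M i)] [∀ i, Module R (M i)],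
      (∀ i, Module.Injective R (M i)) → Module.Injective R (DirectSum ι M)) :
    IsNoetherianRing R := by
  classical
  rw [isNoetherianRing_iff, ← monotone_stabilizes_iff_noetherian]
  intro f
  by_contra hcon
  push_neg at hcon
  -- the union ideal
  set I : Submodule R R := ⨆ n, f n with hI
  have hmemI : ∀ x : R, x ∈ I → ∃ N : ℕ, ∀ n, N ≤ n → x ∈ f n := by
    intro x hx
    obtain ⟨N, hN⟩ := (Submodule.mem_iSup_of_directed _ f.monotone.directed_le).mp hx
    exact ⟨N, fun n hn => f.monotone hn hN⟩
  -- embed each quotient into an injective module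
  let Qn : ℕ → ModuleCat.{u} R := fun n => ModuleCat.of R (R ⧸ f n)
  let En : ℕ → ModuleCat.{u} R := fun n => CategoryTheory.Injective.under (Qn n)
  let ι : ∀ n, Qn n ⟶ En n := fun n => CategoryTheory.Injective.ι (Qn n)
  have hιinj : ∀ n, Function.Injective (ι n) := fun n =>
    (ModuleCat.mono_iff_injective (ι n)).mp inferInstance
  let β : ULift.{u} ℕ → Type u := fun i => En i.down
  have hβinj : ∀ i, Module.Injective R (β i) := fun i =>
    Module.injective_module_of_injective_object R (En i.down)
      (inj := CategoryTheory.Injective.injective_under (Qn i.down))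
  have hD : Module.Injective R (DirectSum (ULift.{u} ℕ) β) := H _ _ hβinj
  -- the maps R → E n
  let φ : ∀ n, R →ₗ[R] En n := fun n => (ι n).hom ∘ₗ (f n).mkQ
  have hφ0 : ∀ n (x : R), x ∈ f n → φ n x = 0 := by
    intro n x hx
    have : (f n).mkQ x = 0 := (Submodule.Quotient.mk_eq_zero _).mpr hx
    show ι n ((f n).mkQ x) = 0
    rw [this, map_zero]
  have hφ0' : ∀ n (x : R), φ n x = 0 → x ∈ f n := by
    intro n x hx
    have : (f n).mkQ x = 0 := by
      apply hιinj n
      rw [map_zero]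
      exact hx
    exact (Submodule.Quotient.mk_eq_zero _).mp this
  -- the map I → ⨁ E n
  have key : ∀ x : I, ∃ d : DirectSum (ULift.{u} ℕ) β,
      ∀ i : ULift.{u} ℕ, d i = φ i.down (x : R) := by
    intro x
    obtain ⟨N, hN⟩ := hmemI x x.2
    refine ⟨DirectSum.mk β ((Finset.range N).image ULift.up)
      (fun i => φ i.1.down (x : R)), fun i => ?_⟩
    by_cases hi : i ∈ (Finset.range N).image ULift.up
    · exact DirectSum.mk_apply_of_mem hi
    · have hge : N ≤ i.down := by
        by_contra hlt
        exact hi (Finset.mem_image.mpr ⟨i.down, Finset.mem_range.mpr (lt_of_not_ge hlt), rfl⟩)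
      rw [DirectSum.mk_apply_of_notMem hi, hφ0 i.down _ (hN _ hge)]
  choose G hG using key
  let g : ↥I →ₗ[R] DirectSum (ULift.{u} ℕ) β :=
    { toFun := G
      map_add' := by
        intro x y
        refine DFunLike.ext _ _ fun i => ?_
        rw [DirectSum.add_apply, hG, hG, hG, Submodule.coe_add, map_add]
      map_smul' := by
        intro r x
        refine DFunLike.ext _ _ fun i => ?_
        rw [RingHom.id_apply, DFinsupp.smul_apply, hG, hG, Submodule.coe_smul, map_smul] }
  -- extend it to R using injectivity of the direct sum
  obtain ⟨h, hh⟩ := hD.out I.subtype (Submodule.injective_subtype I) g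
  -- the image of 1 has finite support
  set d : DirectSum (ULift.{u} ℕ) β := h 1 with hd
  set N : ℕ := (d.support.image ULift.down).sup id + 1 with hNdef
  have hdz : ∀ n : ℕ, N ≤ n → d (ULift.up n) = 0 := by
    intro n hn
    by_contra hne
    have hmem : ULift.up n ∈ d.support := DFinsupp.mem_support_iff.mpr hne
    have : n ≤ (d.support.image ULift.down).sup id :=
      Finset.le_sup (f := id) (Finset.mem_image.mpr ⟨ULift.up n, hmem, rfl⟩)
    omega
  -- hence I = f n for all n ≥ N
  have hIle : ∀ n : ℕ, N ≤ n → I ≤ f n := by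
    intro n hn x hx
    have h1 : h x = G ⟨x, hx⟩ := hh ⟨x, hx⟩
    have h2 : h x = x • d := by
      rw [hd, ← map_smul, smul_eq_mul, mul_one]
    have h3 : φ n x = 0 := by
      have := hG ⟨x, hx⟩ (ULift.up n)
      rw [← h1, h2] at this
      rw [← this, DFinsupp.smul_apply, hdz n hn, smul_zero]
    exact hφ0' n x h3
  obtain ⟨m, hm, hne⟩ := hcon N
  have h1 : f m ≤ f N := le_trans (le_iSup f m) (hIle N le_rfl)
  exact hne (le_antisymm (f.monotone hm) h1)
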